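/- Let H be a complex Hilbert space, let q be a real number with 0 < q < 1, and let X and Y be bounded operators on H with Y self-adjoint, ker X = {0}, and YX = q²XY. Let |X| := (X*X)^{1/2} denote the positive square root of X*X, and suppose v is an isometry on H (v*v = 1) such that X = v|X|. Then Yv = q²vY. -/

import Mathlib

open ContinuousLinearMap

section Aux

variable {A : Type*} [CStarAlgebra A]

lemma my_commute_of_mem_elemental {a b x : A} (h : b * a = a * b)
    (hstar : b * star a = star a * b) (hx : x ∈ StarAlgebra.elemental ℂ a) :
    b * x = x * b := by
  induction hx using StarAlgebra.elemental.induction_on with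
  | self => exact h
  | star_self => exact hstar
  | algebraMap r => simpa using (Algebra.commutes r b).symm
  | add u hu v hv pu pv => rw [mul_add, add_mul, pu, pv]
  | mul u hu v hv pu pv => rw [← mul_assoc, pu, mul_assoc, pv, mul_assoc]
  | closure s hs pP v hv =>
      exact Set.EqOn.closure (fun u hu => pP u hu) (continuous_mul_left b)
        (continuous_mul_right b) hv

lemma my_commute_cfc_complex {a b : A} (h : b * a = a * b)
    (hstar : b * star a = star a * b) (f : ℂ → ℂ) :
    b * cfc f a = cfc f a * b := by
  refine cfc_cases (fun x => b * x = x * b) a f (by simp) fun hf ha => ?_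
  refine my_commute_of_mem_elemental h hstar ?_
  rw [cfcHom_eq_of_isStarNormal]
  exact ((continuousFunctionalCalculus a) _).2

lemma my_commute_cfc_real {a b : A} (ha : IsSelfAdjoint a) (h : b * a = a * b) (f : ℝ → ℝ) :
    b * cfc f a = cfc f a * b := by
  rw [cfc_real_eq_complex f ha]
  exact my_commute_cfc_complex h (by rw [ha.star_eq]; exact h) _

end Aux

set_option synthInstance.maxHeartbeats 1000000 in
set_option maxHeartbeats 1000000 in
/-- Let `0 < q < 1`, let `X, Y` be bounded operators on a complex Hilbert space `H` with
`Y` self-adjoint, `ker X = {0}` and `Y X = q² X Y`.  Let `T = |X| = (X*X)^{1/2}` be the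
positive square root of `X*X` (encoded by `T ≥ 0` and `T² = X*X`) and suppose `v` is an
isometry (`v*v = 1`) with `X = v T` (polar decomposition).  Then `Y v = q² v Y`. -/
theorem polar_part_commutation
    {H : Type*} [NormedAddCommGroup H] [InnerProductSpace ℂ H] [CompleteSpace H]
    (q : ℝ) (hq0 : 0 < q) (hq1 : q < 1)
    (X Y v T : H →L[ℂ] H)
    (hY : IsSelfAdjoint Y) (hkerX : LinearMap.ker (X : H →ₗ[ℂ] H) = ⊥)
    (hYX : Y ∘L X = ((q : ℂ) ^ 2) • (X ∘L Y))
    (hTpos : T.IsPositive) (hTsq : T ∘L T = adjoint X ∘L X)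
    (hv : adjoint v ∘L v = 1) (hpolar : X = v ∘L T) :
    Y ∘L v = ((q : ℂ) ^ 2) • (v ∘L Y) := by
  have hq2 : ((q : ℂ) ^ 2) ≠ 0 := by
    simp only [ne_eq, pow_eq_zero_iff, OfNat.ofNat_ne_zero, not_false_eq_true]
    exact_mod_cast hq0.ne'
  have hYX' : Y * X = ((q : ℂ) ^ 2) • (X * Y) := hYX
  have hstarq : star ((q : ℂ) ^ 2) = (q : ℂ) ^ 2 := by
    simp [Complex.star_def, ← Complex.ofReal_pow]
  -- adjoint relation
  have hadj : star X * Y = ((q : ℂ) ^ 2) • (Y * star X) := by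
    have := congrArg star hYX'
    rwa [star_mul, star_smul, star_mul, hY.star_eq, hstarq] at this
  -- Y commutes with X*X
  have hYa : Y * (star X * X) = (star X * X) * Y := by
    have h1 : Y * star X = ((q : ℂ) ^ 2)⁻¹ • (star X * Y) := by
      rw [eq_inv_smul_iff₀ hq2]; exact hadj.symm
    calc Y * (star X * X) = (Y * star X) * X := by rw [mul_assoc]
      _ = ((q : ℂ) ^ 2)⁻¹ • (star X * (Y * X)) := by
          rw [h1, smul_mul_assoc, mul_assoc]
      _ = ((q : ℂ) ^ 2)⁻¹ • (star X * (((q : ℂ) ^ 2) • (X * Y))) := by rw [hYX']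
      _ = (star X * X) * Y := by
          rw [mul_smul_comm, smul_smul, inv_mul_cancel₀ hq2, one_smul, mul_assoc]
  -- T = sqrt (X*X)
  have hT0 : (0 : H →L[ℂ] H) ≤ T := (nonneg_iff_isPositive T).mpr hTpos
  have hTa : T * T = star X * X := by
    rw [star_eq_adjoint]; exact hTsq
  have ha0 : (0 : H →L[ℂ] H) ≤ star X * X := star_mul_self_nonneg X
  have hsa : IsSelfAdjoint (star X * X) := .of_nonneg ha0
  have hsqrt : CFC.sqrt (star X * X) = T := CFC.sqrt_unique hTa hT0
  -- Y commutes with T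
  have hYT : Y * T = T * Y := by
    rw [← hsqrt, CFC.sqrt_eq_cfc, cfc_nnreal_eq_real NNReal.sqrt _ ha0]
    exact my_commute_cfc_real hsa hYa _
  -- X = v * T
  have hpolar' : X = v * T := hpolar
  -- D * T = 0
  have hDT : (Y * v - ((q : ℂ) ^ 2) • (v * Y)) * T = 0 := by
    have h2 : Y * (v * T) = ((q : ℂ) ^ 2) • ((v * Y) * T) := by
      rw [← hpolar', hYX', hpolar', mul_assoc, ← hYT, ← mul_assoc]
    rw [sub_mul, smul_mul_assoc, mul_assoc, h2, sub_self]
  -- T is selfadjoint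
  have hTsa : adjoint T = T := by
    rw [← star_eq_adjoint]; exact hTpos.isSelfAdjoint
  -- ker T = ⊥
  have hkerT : ∀ y : H, T y = 0 → y = 0 := by
    intro y hy
    have hXy : X y = 0 := by rw [hpolar]; simp [hy]
    have : y ∈ LinearMap.ker (X : H →ₗ[ℂ] H) := LinearMap.mem_ker.mpr hXy
    rw [hkerX] at this
    simpa using this
  -- range T is dense
  have horth : (LinearMap.range (T : H →ₗ[ℂ] H))ᗮ = ⊥ := by
    rw [Submodule.eq_bot_iff]
    intro y hy
    have hTy : T y = 0 := by
      have h3 := (Submodule.mem_orthogonal _ y).mp hy (T (T y)) ⟨T y, rfl⟩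
      nth_rewrite 1 [← hTsa] at h3
      rw [adjoint_inner_left] at h3
      exact inner_self_eq_zero.mp h3
    exact hkerT y hTy
  have hdense : (LinearMap.range (T : H →ₗ[ℂ] H)).topologicalClosure = ⊤ := by
    rw [← Submodule.orthogonal_orthogonal_eq_closure, horth, Submodule.bot_orthogonal_eq_top]
  -- conclude
  have hle : LinearMap.range (T : H →ₗ[ℂ] H) ≤ LinearMap.ker ((Y * v - ((q : ℂ) ^ 2) • (v * Y)) : H →ₗ[ℂ] H) := by
    rintro _ ⟨y, rfl⟩
    have h4 := congrArg (fun f : H →L[ℂ] H => f y) hDT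
    rw [LinearMap.mem_ker]
    simpa using h4
  have hcl : IsClosed ((LinearMap.ker ((Y * v - ((q : ℂ) ^ 2) • (v * Y)) : H →ₗ[ℂ] H) :
      Submodule ℂ H) : Set H) :=
    ContinuousLinearMap.isClosed_ker (Y * v - ((q : ℂ) ^ 2) • (v * Y))
  have htop := Submodule.topologicalClosure_minimal _ hle hcl
  rw [hdense, top_le_iff] at htop
  have hD0 : Y * v - ((q : ℂ) ^ 2) • (v * Y) = 0 := by
    ext y
    have h5 : y ∈ LinearMap.ker ((Y * v - ((q : ℂ) ^ 2) • (v * Y)) : H →ₗ[ℂ] H) :=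
      htop.symm ▸ Submodule.mem_top
    simpa using LinearMap.mem_ker.mp h5
  exact sub_eq_zero.mp hD0
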